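/- Let α > 1, θ ∈ (0, 1/2), t₀ > 0, and δ : [t₀, ∞) → (0, ∞) be C¹ with inf_t t·δ'(t)/δ(t) > -∞ and sup_t t·δ'(t)/δ(t) < 1/θ - 2. Let r : [t₀, ∞) → ℝ^m be C¹ and define M(t) := t^{-(α-1)} ∫_{t₀}^t s^α δ(s)(r(s) + θ s ṙ(s)) ds. If M(t) → 0 as t → ∞, then t² δ(t) r(t) → 0 as t → ∞. -/

import Mathlib

open Filter Topology MeasureTheory

private lemma cesaro_aux {w N E : ℝ → ℝ} {t₁ K : ℝ}
    (hw : ∀ s, t₁ ≤ s → 0 ≤ w s)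
    (hN : ∀ s, t₁ ≤ s → 0 ≤ N s)
    (hK : 0 ≤ K)
    (hwint : ∀ a b : ℝ, t₁ ≤ a → a ≤ b → IntervalIntegrable w volume a b)
    (hwNint : ∀ a b : ℝ, t₁ ≤ a → a ≤ b → IntervalIntegrable (fun s => w s * N s) volume a b)
    (hW : ∀ t, t₁ ≤ t → (∫ s in t₁..t, w s) ≤ K * E t)
    (hEpos : ∀ t, t₁ ≤ t → 0 < E t)
    (hE : Tendsto E atTop atTop)
    (hNlim : Tendsto N atTop (nhds 0)) :
    Tendsto (fun t => (E t)⁻¹ * ∫ s in t₁..t, w s * N s) atTop (nhds 0) := by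
  rw [Metric.tendsto_atTop]
  intro ε hε
  set ε₁ := ε / (2 * (K + 1)) with hε₁def
  have hε₁ : 0 < ε₁ := by positivity
  obtain ⟨T₀, hT₀⟩ := (Metric.tendsto_atTop.mp hNlim) ε₁ hε₁
  set T := max t₁ T₀ with hTdef
  have hT₁ : t₁ ≤ T := le_max_left _ _
  set A := ∫ s in t₁..T, w s * N s with hA
  have hA0 : 0 ≤ A :=
    intervalIntegral.integral_nonneg hT₁ (fun s hs => mul_nonneg (hw s hs.1) (hN s hs.1))
  obtain ⟨T₂, hT₂⟩ := eventually_atTop.mp (tendsto_atTop.mp hE (2 * (A + 1) / ε))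
  refine ⟨max T T₂, fun t ht => ?_⟩
  have htT : T ≤ t := le_trans (le_max_left _ _) ht
  have ht₁ : t₁ ≤ t := le_trans hT₁ htT
  have hEt : 0 < E t := hEpos t ht₁
  have hEt2 : 2 * (A + 1) / ε ≤ E t := hT₂ t (le_trans (le_max_right _ _) ht)
  have hsplit : (∫ s in t₁..t, w s * N s) = A + ∫ s in T..t, w s * N s := by
    rw [hA, intervalIntegral.integral_add_adjacent_intervals
      (hwNint t₁ T le_rfl hT₁) (hwNint T t hT₁ htT)]
  have hbound2 : (∫ s in T..t, w s * N s) ≤ ε₁ * ∫ s in T..t, w s := by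
    rw [← intervalIntegral.integral_const_mul]
    apply intervalIntegral.integral_mono_on htT (hwNint T t hT₁ htT)
      ((hwint T t hT₁ htT).const_mul ε₁)
    intro s hs
    have hs1 : t₁ ≤ s := le_trans hT₁ hs.1
    have hNs : N s ≤ ε₁ := by
      have h := hT₀ s (le_trans (le_max_right _ _) hs.1)
      rw [Real.dist_eq, sub_zero] at h
      exact le_of_lt (lt_of_abs_lt h)
    calc w s * N s ≤ w s * ε₁ := mul_le_mul_of_nonneg_left hNs (hw s hs1)
      _ = ε₁ * w s := mul_comm _ _
  have hbound3 : (∫ s in T..t, w s) ≤ K * E t := by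
    have h1 : (∫ s in t₁..T, w s) + (∫ s in T..t, w s) = ∫ s in t₁..t, w s :=
      intervalIntegral.integral_add_adjacent_intervals (hwint t₁ T le_rfl hT₁) (hwint T t hT₁ htT)
    have h2 : 0 ≤ ∫ s in t₁..T, w s :=
      intervalIntegral.integral_nonneg hT₁ (fun s hs => hw s hs.1)
    linarith [hW t ht₁]
  have hInonneg : 0 ≤ ∫ s in t₁..t, w s * N s :=
    intervalIntegral.integral_nonneg ht₁ (fun s hs => mul_nonneg (hw s hs.1) (hN s hs.1))
  rw [Real.dist_eq, sub_zero, abs_of_nonneg (by positivity)]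
  have hval : (E t)⁻¹ * ∫ s in t₁..t, w s * N s ≤ (E t)⁻¹ * A + ε₁ * K := by
    have h3 : (∫ s in t₁..t, w s * N s) ≤ A + ε₁ * (K * E t) := by
      have h4 := mul_le_mul_of_nonneg_left hbound3 (le_of_lt hε₁)
      rw [hsplit]
      linarith [hbound2]
    calc (E t)⁻¹ * ∫ s in t₁..t, w s * N s ≤ (E t)⁻¹ * (A + ε₁ * (K * E t)) :=
          mul_le_mul_of_nonneg_left h3 (by positivity)
      _ = (E t)⁻¹ * A + ε₁ * K * ((E t)⁻¹ * E t) := by ring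
      _ = (E t)⁻¹ * A + ε₁ * K := by rw [inv_mul_cancel₀ (ne_of_gt hEt)]; ring
  have h5 : (E t)⁻¹ * A ≤ ε / 2 := by
    have hpos : (0:ℝ) < 2 * (A + 1) / ε := by positivity
    have h6 : (E t)⁻¹ ≤ (2 * (A + 1) / ε)⁻¹ := by
      apply inv_anti₀ hpos hEt2
    have h7 : (2 * (A + 1) / ε)⁻¹ * A ≤ ε / 2 := by
      rw [inv_div, div_mul_eq_mul_div, div_le_iff₀ (by positivity)]
      nlinarith
    exact le_trans (mul_le_mul_of_nonneg_right h6 hA0) h7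
  have h8 : ε₁ * K < ε / 2 := by
    rw [hε₁def, div_mul_eq_mul_div, div_lt_iff₀ (by positivity)]
    nlinarith
  linarith

theorem stmt_16 {m : ℕ} (α θ t₀ : ℝ) (hα : 1 < α)
    (hθ : θ ∈ Set.Ioo (0 : ℝ) (1 / 2)) (ht₀ : 0 < t₀)
    (δ δ' : ℝ → ℝ)
    (hδpos : ∀ t ∈ Set.Ici t₀, 0 < δ t)
    (hδ : ∀ t ∈ Set.Ici t₀, HasDerivAt δ (δ' t) t)
    (hδ'c : ContinuousOn δ' (Set.Ici t₀))
    (hρlow : ∃ c : ℝ, ∀ t ∈ Set.Ici t₀, c ≤ t * δ' t / δ t)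
    (hρhigh : ∃ c : ℝ, c < 1 / θ - 2 ∧ ∀ t ∈ Set.Ici t₀, t * δ' t / δ t ≤ c)
    (r r' : ℝ → EuclideanSpace ℝ (Fin m))
    (hr : ∀ t ∈ Set.Ici t₀, HasDerivAt r (r' t) t)
    (hr'c : ContinuousOn r' (Set.Ici t₀))
    (hM : Tendsto
      (fun t => (t ^ (α - 1))⁻¹ •
        ∫ s in t₀..t, (s ^ α * δ s) • (r s + (θ * s) • r' s))
      atTop (nhds 0)) :
    Tendsto (fun t => (t ^ 2 * δ t) • r t) atTop (nhds 0) := by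
  obtain ⟨hθ0, hθhalf⟩ := hθ
  obtain ⟨c₀, hc₀⟩ := hρlow
  obtain ⟨c₁, hc₁lt, hc₁⟩ := hρhigh
  set t₁ : ℝ := t₀ + 1 with ht₁def
  have ht₀₁ : t₀ < t₁ := by linarith
  have ht₁pos : 0 < t₁ := by linarith
  have hαpos : (0:ℝ) < α - 1 := by linarith
  set u₀ : ℝ := 1/θ - 2 - c₁ with hu₀def
  have hu₀ : 0 < u₀ := by rw [hu₀def]; linarith
  set B : ℝ := |1/θ - 2 - c₀| + (α - 1) with hBdef
  have hBpos : 0 < B := by positivity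
  set u : ℝ → ℝ := fun s => 1/θ - 2 - s * δ' s / δ s with hudef
  have hul : ∀ s, t₀ ≤ s → u₀ ≤ u s := by
    intro s hs; have := hc₁ s hs; simp only [hudef, hu₀def]; linarith
  have hb : ∀ s, t₀ ≤ s → |u s - (α - 1)| ≤ B := by
    intro s hs
    have h1 := hc₀ s hs
    have h2 := hul s hs
    have h3 := le_abs_self (1/θ - 2 - c₀)
    have h4 := abs_nonneg (1/θ - 2 - c₀)
    rw [abs_le]
    constructor
    · simp only [hBdef, hudef]
      have h6 := hc₁ s hs
      linarith
    · simp only [hBdef, hudef]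
      linarith
  -- continuity basics
  have hδc : ContinuousOn δ (Set.Ici t₀) := fun t ht => (hδ t ht).continuousAt.continuousWithinAt
  have hrc : ContinuousOn r (Set.Ici t₀) := fun t ht => (hr t ht).continuousAt.continuousWithinAt
  have hδne : ∀ t ∈ Set.Ici t₀, δ t ≠ 0 := fun t ht => (hδpos t ht).ne'
  have htne : ∀ t ∈ Set.Ici t₀, t ≠ 0 := fun t ht => (lt_of_lt_of_le ht₀ ht).ne'
  have huc : ContinuousOn u (Set.Ici t₀) :=
    continuousOn_const.sub ((continuousOn_id.mul hδ'c).div hδc hδne)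
  have hgc : ContinuousOn (fun s => u s / s) (Set.Ici t₀) := huc.div continuousOn_id htne
  have hpowc : ContinuousOn (fun s : ℝ => s ^ α) (Set.Ici t₀) :=
    fun t ht => (Real.continuousAt_rpow_const t α (Or.inl (htne t ht))).continuousWithinAt
  set f : ℝ → EuclideanSpace ℝ (Fin m) := fun s => (s ^ α * δ s) • (r s + (θ * s) • r' s)
    with hfdef
  have hfc : ContinuousOn f (Set.Ici t₀) :=
    (hpowc.mul hδc).smul (hrc.add ((continuousOn_const.mul continuousOn_id).smul hr'c))
  have hsub : ∀ a b : ℝ, t₀ ≤ a → t₀ ≤ b → Set.uIcc a b ⊆ Set.Ici t₀ := by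
    intro a b ha hb x hx
    rcases Set.mem_uIcc.mp hx with h | h
    · exact le_trans ha h.1
    · exact le_trans hb h.1
  have hsub1 : ∀ a b : ℝ, t₁ ≤ a → t₁ ≤ b → Set.uIcc a b ⊆ Set.Ici t₁ := by
    intro a b ha hb x hx
    rcases Set.mem_uIcc.mp hx with h | h
    · exact le_trans ha h.1
    · exact le_trans hb h.1
  have hsub10 : Set.Ici t₁ ⊆ Set.Ici t₀ := Set.Ici_subset_Ici.mpr ht₀₁.le
  -- the integrating factor
  set IE : ℝ → ℝ := fun t => ∫ s in t₁..t, u s / s with hIEdef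
  set E : ℝ → ℝ := fun t => Real.exp (IE t) with hEdef
  have hEpos : ∀ t, 0 < E t := fun t => Real.exp_pos _
  have hIE : ∀ t, t₁ ≤ t → HasDerivAt IE (u t / t) t := by
    intro t ht
    have ht' : t₀ < t := lt_of_lt_of_le ht₀₁ ht
    apply intervalIntegral.integral_hasDerivAt_right
    · exact (hgc.mono (hsub t₁ t ht₀₁.le ht'.le)).intervalIntegrable
    · exact ContinuousOn.stronglyMeasurableAtFilter isOpen_Ioi
        (hgc.mono Set.Ioi_subset_Ici_self) t ht'
    · exact hgc.continuousAt (Ici_mem_nhds ht')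
  have hE' : ∀ t, t₁ ≤ t → HasDerivAt E (E t * (u t / t)) t := fun t ht => (hIE t ht).exp
  have hEc : ContinuousOn E (Set.Ici t₁) := fun t ht => (hE' t ht).continuousAt.continuousWithinAt
  -- h and its derivative
  set h : ℝ → EuclideanSpace ℝ (Fin m) := fun t => (t ^ 2 * δ t) • r t with hhdef
  have hh : ∀ t, t₀ ≤ t →
      HasDerivAt h ((t^2*δ t) • r' t + (2*t*δ t + t^2*δ' t) • r t) t := by
    intro t ht
    have h1 : HasDerivAt (fun s : ℝ => s^2*δ s) (2*t*δ t + t^2*δ' t) t := by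
      have h2 : HasDerivAt (fun s : ℝ => s^2*δ s) _ t := (hasDerivAt_pow 2 t).mul (hδ t ht)
      convert h2 using 1
      push_cast
      norm_num
    exact h1.smul (hr t ht)
  -- key derivative identity
  have key : ∀ t, t₁ ≤ t → HasDerivAt (fun s => E s • h s)
      ((E t / (θ * t ^ (α-1))) • f t) t := by
    intro t ht
    have ht₀t : t₀ ≤ t := le_trans ht₀₁.le ht
    have htpos : 0 < t := lt_of_lt_of_le ht₁pos ht
    have hδt : δ t ≠ 0 := hδne t ht₀t
    have hpow : t ^ (α-1) * t = t ^ α := by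
      rw [← Real.rpow_add_one htpos.ne' (α-1), show α - 1 + 1 = α by ring]
    have hpowpos : 0 < t ^ (α - 1) := Real.rpow_pos_of_pos htpos _
    have H : HasDerivAt (fun s => E s • h s) _ t := (hE' t ht).smul (hh t ht₀t)
    convert H using 1
    simp only [hfdef, hhdef, hudef]
    match_scalars
    · rw [← hpow]
      field_simp
      ring
    · rw [← hpow]
      field_simp
  -- continuity of the weight v
  have hvc : ContinuousOn (fun s => E s / (θ * s ^ (α-1))) (Set.Ici t₁) := by
    apply hEc.div
    · exact continuousOn_const.mul (fun t ht =>
        (Real.continuousAt_rpow_const t (α-1)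
          (Or.inl (htne t (hsub10 ht)))).continuousWithinAt)
    · intro t ht
      have htpos : 0 < t := lt_of_lt_of_le ht₁pos ht
      have := Real.rpow_pos_of_pos htpos (α-1)
      positivity
  have hInt1 : ∀ a b : ℝ, t₁ ≤ a → t₁ ≤ b →
      IntervalIntegrable (fun s => (E s / (θ * s ^ (α-1))) • f s) volume a b := by
    intro a b ha hb
    exact ((hvc.smul (hfc.mono hsub10)).mono (hsub1 a b ha hb)).intervalIntegrable
  have hfund1 : ∀ t, t₁ ≤ t →
      (∫ s in t₁..t, (E s / (θ * s ^ (α-1))) • f s) = E t • h t - E t₁ • h t₁ := by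
    intro t ht
    apply intervalIntegral.integral_eq_sub_of_hasDerivAt
    · intro s hs
      rw [Set.uIcc_of_le ht] at hs
      exact key s hs.1
    · exact hInt1 t₁ t le_rfl ht
  -- F and its derivative
  set F : ℝ → EuclideanSpace ℝ (Fin m) := fun t => ∫ s in t₁..t, f s with hFdef
  have hF : ∀ t, t₁ ≤ t → HasDerivAt F (f t) t := by
    intro t ht
    have ht' : t₀ < t := lt_of_lt_of_le ht₀₁ ht
    apply intervalIntegral.integral_hasDerivAt_right
    · exact (hfc.mono (hsub t₁ t ht₀₁.le ht'.le)).intervalIntegrable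
    · exact ContinuousOn.stronglyMeasurableAtFilter isOpen_Ioi
        (hfc.mono Set.Ioi_subset_Ici_self) t ht'
    · exact hfc.continuousAt (Ici_mem_nhds ht')
  have hFc : ContinuousOn F (Set.Ici t₁) := fun t ht => (hF t ht).continuousAt.continuousWithinAt
  set Y : ℝ → EuclideanSpace ℝ (Fin m) :=
    fun s => ((E s * (u s - (α-1))) / (θ * s ^ α)) • F s with hYdef
  have keyψ : ∀ s, t₁ ≤ s → HasDerivAt (fun τ => (E τ / (θ * τ ^ (α-1))) • F τ)
      ((E s / (θ * s ^ (α-1))) • f s + Y s) s := by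
    intro s hs
    have h0s : 0 < s := lt_of_lt_of_le ht₁pos hs
    have hd : HasDerivAt (fun τ : ℝ => θ * τ ^ (α-1)) (θ * ((α-1) * s ^ (α-1-1))) s :=
      (Real.hasDerivAt_rpow_const (Or.inl h0s.ne')).const_mul θ
    have hdpos : 0 < θ * s ^ (α-1) := by
      have := Real.rpow_pos_of_pos h0s (α-1); positivity
    have hv : HasDerivAt (fun τ => E τ / (θ * τ ^ (α-1)))
        ((E s * (u s / s) * (θ * s^(α-1)) - E s * (θ * ((α-1) * s^(α-1-1)))) / (θ * s^(α-1))^2)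
        s := (hE' s hs).div hd hdpos.ne'
    have H : HasDerivAt (fun τ => (E τ / (θ * τ ^ (α-1))) • F τ) _ s := hv.smul (hF s hs)
    convert H using 1
    congr 1
    simp only [hYdef]
    congr 1
    have hp1 : s ^ (α-1-1) * s = s ^ (α-1) := by
      rw [← Real.rpow_add_one h0s.ne' (α-1-1), show α - 1 - 1 + 1 = α - 1 by ring]
    have hp2 : s ^ (α-1-1) * s * s = s ^ α := by
      rw [hp1, ← Real.rpow_add_one h0s.ne' (α-1), show α - 1 + 1 = α by ring]
    rw [← hp2, ← hp1]
    have hXpos : 0 < s ^ (α-1-1) := Real.rpow_pos_of_pos h0s _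
    field_simp
  have hYc : ContinuousOn Y (Set.Ici t₁) := by
    apply ContinuousOn.fun_smul _ hFc
    apply ContinuousOn.div
    · exact hEc.mul ((huc.mono hsub10).sub continuousOn_const)
    · exact continuousOn_const.mul (hpowc.mono hsub10)
    · intro t ht
      have htpos : 0 < t := lt_of_lt_of_le ht₁pos ht
      have := Real.rpow_pos_of_pos htpos α
      positivity
  have hIntY : ∀ a b : ℝ, t₁ ≤ a → t₁ ≤ b → IntervalIntegrable Y volume a b :=
    fun a b ha hb => (hYc.mono (hsub1 a b ha hb)).intervalIntegrable
  have hfund2 : ∀ t, t₁ ≤ t →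
      (∫ s in t₁..t, ((E s / (θ * s ^ (α-1))) • f s + Y s))
        = (E t / (θ * t ^ (α-1))) • F t := by
    intro t ht
    rw [intervalIntegral.integral_eq_sub_of_hasDerivAt
      (fun s hs => by rw [Set.uIcc_of_le ht] at hs; exact keyψ s hs.1)
      ((hInt1 t₁ t le_rfl ht).add (hIntY t₁ t le_rfl ht))]
    have hF0 : F t₁ = 0 := intervalIntegral.integral_same
    rw [hF0, smul_zero, sub_zero]
  have hrep : ∀ t, t₁ ≤ t → h t = (E t)⁻¹ • (E t₁ • h t₁)
      + (E t)⁻¹ • ((E t / (θ * t ^ (α-1))) • F t)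
      - (E t)⁻¹ • (∫ s in t₁..t, Y s) := by
    intro t ht
    have h2 := hfund2 t ht
    rw [intervalIntegral.integral_add (hInt1 t₁ t le_rfl ht) (hIntY t₁ t le_rfl ht),
      hfund1 t ht] at h2
    have h3 : E t • h t = E t₁ • h t₁ + (E t / (θ * t ^ (α-1))) • F t
        - ∫ s in t₁..t, Y s := by
      rw [← h2]; abel
    calc h t = (E t)⁻¹ • (E t • h t) := by
          rw [smul_smul, inv_mul_cancel₀ (hEpos t).ne', one_smul]
      _ = _ := by rw [h3, smul_sub, smul_add]
  -- E tends to infinity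
  have hIEge : ∀ t, t₁ ≤ t → u₀ * (Real.log t - Real.log t₁) ≤ IE t := by
    intro t ht
    have h1 : (∫ s in t₁..t, u₀ / s) ≤ ∫ s in t₁..t, u s / s := by
      apply intervalIntegral.integral_mono_on ht
      · apply ContinuousOn.intervalIntegrable
        apply continuousOn_const.div continuousOn_id
        intro x hx
        exact (lt_of_lt_of_le ht₁pos (((hsub1 t₁ t le_rfl ht) hx))).ne'
      · exact (hgc.mono (hsub t₁ t ht₀₁.le (le_trans ht₀₁.le ht))).intervalIntegrable
      · intro s hs
        have h0s : 0 < s := lt_of_lt_of_le ht₁pos hs.1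
        have := hul s (le_trans ht₀₁.le hs.1)
        gcongr
    have h2 : (∫ s in t₁..t, u₀ / s) = u₀ * (Real.log t - Real.log t₁) := by
      simp only [div_eq_mul_inv]
      rw [intervalIntegral.integral_const_mul]
      have h0 : (0:ℝ) ∉ Set.uIcc t₁ t := by
        intro hx
        rcases Set.mem_uIcc.mp hx with hc | hc
        · exact absurd hc.1 (not_le.mpr ht₁pos)
        · exact absurd hc.1 (not_le.mpr (lt_of_lt_of_le ht₁pos ht))
      rw [_root_.integral_inv h0, Real.log_div (lt_of_lt_of_le ht₁pos ht).ne' ht₁pos.ne']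
    have h3 : IE t = ∫ s in t₁..t, u s / s := by rw [hIEdef]
    rw [h3, ← h2]
    exact h1
  have hEtop : Tendsto E atTop atTop := by
    have h1 : Tendsto (fun t : ℝ => u₀ * (Real.log t - Real.log t₁)) atTop atTop := by
      apply Tendsto.const_mul_atTop hu₀
      simp only [sub_eq_add_neg]
      exact tendsto_atTop_add_const_right _ _ Real.tendsto_log_atTop
    have h2 : Tendsto IE atTop atTop := by
      apply tendsto_atTop_mono' _ _ h1
      filter_upwards [eventually_ge_atTop t₁] with t ht
      exact hIEge t ht
    exact Real.tendsto_exp_atTop.comp h2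
  have hEinv : Tendsto (fun t => (E t)⁻¹) atTop (nhds 0) := hEtop.inv_tendsto_atTop
  have hP₁ : Tendsto (fun t => (E t)⁻¹ • (E t₁ • h t₁)) atTop (nhds 0) := by
    simpa using hEinv.smul_const (E t₁ • h t₁)
  -- the middle term
  have hCint : ∀ b, t₀ ≤ b → IntervalIntegrable f volume t₀ b :=
    fun b hb => (hfc.mono (hsub t₀ b le_rfl hb)).intervalIntegrable
  have hFsplit : ∀ t, t₁ ≤ t → F t = (∫ s in t₀..t, f s) - ∫ s in t₀..t₁, f s :=
    fun t ht => (intervalIntegral.integral_interval_sub_left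
      (hCint t (le_trans ht₀₁.le ht)) (hCint t₁ ht₀₁.le)).symm
  have hMterm : Tendsto (fun t => (t ^ (α-1))⁻¹ • F t) atTop (nhds 0) := by
    have h1 : Tendsto (fun t : ℝ => (t ^ (α-1))⁻¹) atTop (nhds 0) :=
      (tendsto_rpow_atTop hαpos).inv_tendsto_atTop
    have h2 : Tendsto (fun t => (t^(α-1))⁻¹ • ((∫ s in t₀..t, f s) - ∫ s in t₀..t₁, f s))
        atTop (nhds 0) := by
      have h3 := hM.sub (h1.smul_const (∫ s in t₀..t₁, f s))
      simp only [zero_smul, sub_zero] at h3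
      apply h3.congr
      intro t
      rw [smul_sub]
    apply h2.congr'
    filter_upwards [eventually_ge_atTop t₁] with t ht
    rw [hFsplit t ht]
  have hP₂ : Tendsto (fun t => (E t)⁻¹ • ((E t / (θ * t ^ (α-1))) • F t)) atTop (nhds 0) := by
    have h1 : Tendsto (fun t => θ⁻¹ • ((t ^ (α-1))⁻¹ • F t)) atTop (nhds 0) := by
      simpa using hMterm.const_smul θ⁻¹
    apply h1.congr'
    filter_upwards [eventually_ge_atTop t₁] with t ht
    rw [smul_smul, smul_smul]
    congr 1
    have hEt := (hEpos t).ne'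
    have hpp : (0:ℝ) < t ^ (α-1) := Real.rpow_pos_of_pos (lt_of_lt_of_le ht₁pos ht) _
    field_simp
  -- the Cesàro term
  set N : ℝ → ℝ := fun s => (B / θ) * ((s ^ (α-1))⁻¹ * ‖F s‖) with hNdef
  have hNlim : Tendsto N atTop (nhds 0) := by
    have h1 : Tendsto (fun s => ‖(s ^ (α-1))⁻¹ • F s‖) atTop (nhds 0) := by
      simpa using hMterm.norm
    have h2 : Tendsto (fun s => (B/θ) * ‖(s ^ (α-1))⁻¹ • F s‖) atTop (nhds 0) := by
      simpa using h1.const_mul (B/θ)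
    apply h2.congr'
    filter_upwards [eventually_ge_atTop t₁] with s hs
    have h0s : 0 < s := lt_of_lt_of_le ht₁pos hs
    rw [norm_smul, Real.norm_eq_abs,
      abs_of_pos (inv_pos.mpr (Real.rpow_pos_of_pos h0s _))]
  have hNnonneg : ∀ s, t₁ ≤ s → 0 ≤ N s := by
    intro s hs
    have h0s : 0 < s := lt_of_lt_of_le ht₁pos hs
    have := Real.rpow_pos_of_pos h0s (α-1)
    have := norm_nonneg (F s)
    positivity
  have hNc : ContinuousOn N (Set.Ici t₁) := by
    apply continuousOn_const.mul
    apply ContinuousOn.mul _ hFc.norm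
    apply ContinuousOn.inv₀
    · exact fun t ht => (Real.continuousAt_rpow_const t (α-1)
        (Or.inl (htne t (hsub10 ht)))).continuousWithinAt
    · exact fun t ht => (Real.rpow_pos_of_pos (lt_of_lt_of_le ht₁pos ht) _).ne'
  have hwc : ContinuousOn (fun s => E s / s) (Set.Ici t₁) :=
    hEc.div continuousOn_id (fun x hx => (lt_of_lt_of_le ht₁pos hx).ne')
  have hwint : ∀ a b : ℝ, t₁ ≤ a → a ≤ b → IntervalIntegrable (fun s => E s / s) volume a b :=
    fun a b ha hab => ((hwc.mono (hsub1 a b ha (le_trans ha hab))).intervalIntegrable)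
  have hwNint : ∀ a b : ℝ, t₁ ≤ a → a ≤ b →
      IntervalIntegrable (fun s => E s / s * N s) volume a b :=
    fun a b ha hab =>
      ((hwc.mul hNc).mono (hsub1 a b ha (le_trans ha hab))).intervalIntegrable
  have hwnonneg : ∀ s, t₁ ≤ s → 0 ≤ E s / s :=
    fun s hs => div_nonneg (hEpos s).le (lt_of_lt_of_le ht₁pos hs).le
  -- ∫ w ≤ u₀⁻¹ E t
  have hEW : ∀ t, t₁ ≤ t → (∫ s in t₁..t, E s / s) ≤ u₀⁻¹ * E t := by
    intro t ht
    have hgc1 : ContinuousOn (fun s => E s * (u s / s)) (Set.Ici t₁) :=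
      hEc.mul (hgc.mono hsub10)
    have h1 : (∫ s in t₁..t, E s / s) ≤ ∫ s in t₁..t, u₀⁻¹ * (E s * (u s / s)) := by
      apply intervalIntegral.integral_mono_on ht (hwint t₁ t le_rfl ht)
        (((hgc1.mono (hsub1 t₁ t le_rfl ht)).intervalIntegrable).const_mul u₀⁻¹)
      intro s hs
      have h0s : 0 < s := lt_of_lt_of_le ht₁pos hs.1
      have hus := hul s (le_trans ht₀₁.le hs.1)
      have hEs := hEpos s
      calc E s / s = E s / s * 1 := (mul_one _).symm
        _ ≤ E s / s * (u₀⁻¹ * u s) := by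
            apply mul_le_mul_of_nonneg_left _ (by positivity)
            rw [← inv_mul_cancel₀ hu₀.ne']
            exact mul_le_mul_of_nonneg_left hus (inv_pos.mpr hu₀).le
        _ = u₀⁻¹ * (E s * (u s / s)) := by ring
    have h2 : (∫ s in t₁..t, E s * (u s / s)) = E t - E t₁ := by
      apply intervalIntegral.integral_eq_sub_of_hasDerivAt
      · intro s hs
        rw [Set.uIcc_of_le ht] at hs
        exact hE' s hs.1
      · exact ((hgc1.mono (hsub1 t₁ t le_rfl ht)).intervalIntegrable)
    rw [intervalIntegral.integral_const_mul, h2] at h1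
    have h3 : u₀⁻¹ * (E t - E t₁) ≤ u₀⁻¹ * E t := by
      apply mul_le_mul_of_nonneg_left _ (inv_pos.mpr hu₀).le
      linarith [hEpos t₁]
    linarith
  have hZ := cesaro_aux hwnonneg hNnonneg (inv_pos.mpr hu₀).le hwint hwNint hEW
    (fun t _ => hEpos t) hEtop hNlim
  -- bound for the third term
  have hbound : ∀ᶠ t in atTop, ‖(E t)⁻¹ • (∫ s in t₁..t, Y s)‖
      ≤ (E t)⁻¹ * ∫ s in t₁..t, E s / s * N s := by
    filter_upwards [eventually_ge_atTop t₁] with t ht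
    rw [norm_smul, Real.norm_eq_abs, abs_of_pos (inv_pos.mpr (hEpos t))]
    apply mul_le_mul_of_nonneg_left _ (inv_pos.mpr (hEpos t)).le
    calc ‖∫ s in t₁..t, Y s‖ ≤ ∫ s in t₁..t, ‖Y s‖ :=
          intervalIntegral.norm_integral_le_integral_norm ht
      _ ≤ ∫ s in t₁..t, E s / s * N s := by
          apply intervalIntegral.integral_mono_on ht
            (((hYc.norm).mono (hsub1 t₁ t le_rfl ht)).intervalIntegrable)
            (hwNint t₁ t le_rfl ht)
          intro s hs
          have h0s : 0 < s := lt_of_lt_of_le ht₁pos hs.1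
          have hs₀ : t₀ ≤ s := le_trans ht₀₁.le hs.1
          have hbs := hb s hs₀
          have hEs := hEpos s
          have hpp : (0:ℝ) < s ^ (α-1) := Real.rpow_pos_of_pos h0s _
          have hpa : (0:ℝ) < s ^ α := Real.rpow_pos_of_pos h0s _
          have hpow : s ^ (α-1) * s = s ^ α := by
            rw [← Real.rpow_add_one h0s.ne' (α-1), show α - 1 + 1 = α by ring]
          have hYs : ‖Y s‖ = |E s * (u s - (α-1)) / (θ * s ^ α)| * ‖F s‖ := by
            rw [hYdef, norm_smul, Real.norm_eq_abs]
          rw [hYs, abs_div, abs_mul, abs_of_pos hEs, abs_of_pos (by positivity : (0:ℝ) < θ * s ^ α)]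
          calc E s * |u s - (α-1)| / (θ * s ^ α) * ‖F s‖
              ≤ E s * B / (θ * s ^ α) * ‖F s‖ := by
                apply mul_le_mul_of_nonneg_right _ (norm_nonneg _)
                gcongr
            _ = E s / s * N s := by
                simp only [hNdef]
                rw [← hpow]
                ring
  have hP₃ : Tendsto (fun t => (E t)⁻¹ • (∫ s in t₁..t, Y s)) atTop (nhds 0) :=
    squeeze_zero_norm' hbound hZ
  -- assemble
  have hfinal := (hP₁.add hP₂).sub hP₃
  rw [show (0:EuclideanSpace ℝ (Fin m)) + 0 - 0 = 0 by simp] at hfinal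
  apply hfinal.congr'
  filter_upwards [eventually_ge_atTop t₁] with t ht
  exact (hrep t ht).symm
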